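/- Let p be a prime, f(x) ∈ ℤ_(p)[x], and a ∈ ℤ_(p). If v_p(f^m(0) - a) > 0 and v_p(f^n(0) - a) > 0 for some 1 ≤ m < n, then there exists ℓ ≥ 1 with v_p(f^ℓ(a) - a) > 0. -/

import Mathlib

namespace Stmt3Aux

variable {p : ℕ} [Fact p.Prime]

/-- p-integral -/
def I (p : ℕ) (x : ℚ) : Prop := x = 0 ∨ 0 ≤ padicValRat p x

/-- divisible by p (in ℤ_(p)) -/
def D (p : ℕ) (x : ℚ) : Prop := x = 0 ∨ 0 < padicValRat p x

lemma D.toI {x : ℚ} (h : D p x) : I p x := h.imp id le_of_lt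

lemma I.zero : I p 0 := Or.inl rfl

lemma I.one : I p 1 := Or.inr (by simp [padicValRat.one])

lemma I.add {x y : ℚ} (hx : I p x) (hy : I p y) : I p (x + y) := by
  rcases eq_or_ne (x + y) 0 with h | h
  · exact Or.inl h
  right
  rcases hx with rfl | hx
  · have := hy.resolve_left (by simpa using h)
    simpa using this
  rcases hy with rfl | hy
  · simpa using hx
  calc (0 : ℤ) ≤ min (padicValRat p x) (padicValRat p y) := le_min hx hy
    _ ≤ _ := padicValRat.min_le_padicValRat_add h

lemma D.add {x y : ℚ} (hx : D p x) (hy : D p y) : D p (x + y) := by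
  rcases eq_or_ne (x + y) 0 with h | h
  · exact Or.inl h
  right
  rcases hx with rfl | hx
  · have := hy.resolve_left (by simpa using h)
    simpa using this
  rcases hy with rfl | hy
  · simpa using hx
  calc (0 : ℤ) < min (padicValRat p x) (padicValRat p y) := lt_min hx hy
    _ ≤ _ := padicValRat.min_le_padicValRat_add h

lemma I.neg {x : ℚ} (hx : I p x) : I p (-x) := by
  rcases hx with rfl | hx
  · exact Or.inl (by simp)
  · exact Or.inr (by rwa [padicValRat.neg])

lemma D.neg {x : ℚ} (hx : D p x) : D p (-x) := by
  rcases hx with rfl | hx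
  · exact Or.inl (by simp)
  · exact Or.inr (by rwa [padicValRat.neg])

lemma I.mul {x y : ℚ} (hx : I p x) (hy : I p y) : I p (x * y) := by
  rcases hx with rfl | hx
  · exact Or.inl (by simp)
  rcases hy with rfl | hy
  · exact Or.inl (by simp)
  rcases eq_or_ne x 0 with rfl | hx0
  · exact Or.inl (by simp)
  rcases eq_or_ne y 0 with rfl | hy0
  · exact Or.inl (by simp)
  right
  rw [padicValRat.mul hx0 hy0]
  positivity

lemma I.mulD {x y : ℚ} (hx : I p x) (hy : D p y) : D p (x * y) := by
  rcases hx with rfl | hx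
  · exact Or.inl (by simp)
  rcases hy with rfl | hy
  · exact Or.inl (by simp)
  rcases eq_or_ne x 0 with rfl | hx0
  · exact Or.inl (by simp)
  rcases eq_or_ne y 0 with rfl | hy0
  · exact Or.inl (by simp)
  right
  rw [padicValRat.mul hx0 hy0]
  omega

lemma I.pow {x : ℚ} (hx : I p x) (k : ℕ) : I p (x ^ k) := by
  induction k with
  | zero => simpa using (I.one : I p 1)
  | succ k ih => rw [pow_succ]; exact ih.mul hx

lemma I.sum {s : Finset ℕ} {g : ℕ → ℚ} (h : ∀ i ∈ s, I p (g i)) :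
    I p (∑ i ∈ s, g i) := by
  classical
  induction s using Finset.induction_on with
  | empty => simpa using (I.zero : I p 0)
  | insert _ _ hnot ih =>
    rw [Finset.sum_insert hnot]
    exact (h _ (by simp)).add (ih fun i hi => h i (by simp [hi]))

lemma D.sum {s : Finset ℕ} {g : ℕ → ℚ} (h : ∀ i ∈ s, D p (g i)) :
    D p (∑ i ∈ s, g i) := by
  classical
  induction s using Finset.induction_on with
  | empty => exact Or.inl (by simp)
  | insert _ _ hnot ih =>
    rw [Finset.sum_insert hnot]
    exact (h _ (by simp)).add (ih fun i hi => h i (by simp [hi]))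

lemma powD {x y : ℚ} (hx : I p x) (hy : I p y) (hxy : D p (x - y)) (k : ℕ) :
    D p (x ^ k - y ^ k) := by
  induction k with
  | zero => exact Or.inl (by simp)
  | succ k ih =>
    have : x ^ (k + 1) - y ^ (k + 1) = x * (x ^ k - y ^ k) + y ^ k * (x - y) := by ring
    rw [this]
    exact (hx.mulD ih).add ((hy.pow k).mulD hxy)

lemma evalI {f : Polynomial ℚ} (hf : ∀ i, I p (f.coeff i)) {x : ℚ} (hx : I p x) :
    I p (f.eval x) := by
  rw [Polynomial.eval_eq_sum_range]
  exact I.sum fun i _ => (hf i).mul (hx.pow i)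

lemma evalD {f : Polynomial ℚ} (hf : ∀ i, I p (f.coeff i)) {x y : ℚ}
    (hx : I p x) (hy : I p y) (hxy : D p (x - y)) : D p (f.eval x - f.eval y) := by
  have : f.eval x - f.eval y =
      ∑ i ∈ Finset.range (f.natDegree + 1), f.coeff i * (x ^ i - y ^ i) := by
    rw [Polynomial.eval_eq_sum_range, Polynomial.eval_eq_sum_range,
      ← Finset.sum_sub_distrib]
    exact Finset.sum_congr rfl fun i _ => by ring
  rw [this]
  exact D.sum fun i _ => (hf i).mulD (powD hx hy hxy i)

lemma iterI {f : Polynomial ℚ} (hf : ∀ i, I p (f.coeff i)) {x : ℚ} (hx : I p x)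
    (k : ℕ) : I p (f.eval^[k] x) := by
  induction k with
  | zero => simpa using hx
  | succ k ih => rw [Function.iterate_succ_apply']; exact evalI hf ih

lemma iterD {f : Polynomial ℚ} (hf : ∀ i, I p (f.coeff i)) {x y : ℚ}
    (hx : I p x) (hy : I p y) (hxy : D p (x - y)) (k : ℕ) :
    D p (f.eval^[k] x - f.eval^[k] y) := by
  induction k with
  | zero => simpa using hxy
  | succ k ih =>
    rw [Function.iterate_succ_apply', Function.iterate_succ_apply']
    exact evalD hf (iterI hf hx k) (iterI hf hy k) ih

end Stmt3Aux

open Stmt3Aux in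
theorem stmt3 (p : ℕ) (hp : p.Prime) (f : Polynomial ℚ)
    (hf : ∀ i, f.coeff i = 0 ∨ 0 ≤ padicValRat p (f.coeff i))
    (a : ℚ) (ha : a = 0 ∨ 0 ≤ padicValRat p a)
    (m n : ℕ) (hm : 1 ≤ m) (hmn : m < n)
    (hvm : f.eval^[m] 0 - a = 0 ∨ 0 < padicValRat p (f.eval^[m] 0 - a))
    (hvn : f.eval^[n] 0 - a = 0 ∨ 0 < padicValRat p (f.eval^[n] 0 - a)) :
    ∃ l : ℕ, 1 ≤ l ∧ (f.eval^[l] a - a = 0 ∨ 0 < padicValRat p (f.eval^[l] a - a)) := by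
  haveI : Fact p.Prime := ⟨hp⟩
  have hf' : ∀ i, I p (f.coeff i) := hf
  have ha' : I p a := ha
  have hvm' : D p (f.eval^[m] 0 - a) := hvm
  have hvn' : D p (f.eval^[n] 0 - a) := hvn
  have hbm : I p (f.eval^[m] 0) := iterI hf' I.zero m
  -- a - f^[m] 0 is divisible
  have hamb : D p (a - f.eval^[m] 0) := by
    have := hvm'.neg
    simpa [neg_sub] using this
  have h1 : D p (f.eval^[n - m] a - f.eval^[n - m] (f.eval^[m] 0)) :=
    iterD hf' ha' hbm hamb (n - m)
  have hkey : f.eval^[n - m] (f.eval^[m] 0) = f.eval^[n] 0 := by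
    rw [← Function.iterate_add_apply]
    congr 1
    omega
  refine ⟨n - m, by omega, ?_⟩
  have : f.eval^[n - m] a - a =
      (f.eval^[n - m] a - f.eval^[n - m] (f.eval^[m] 0)) + (f.eval^[n] 0 - a) := by
    rw [hkey]; ring
  rw [this]
  exact h1.add hvn'
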